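/- In the symplectic setting, if a, b ∈ V satisfy B(a, b) = 0, then the k-linear span of D_a, D_b and D_{a+b} is an inner ideal of the Lie algebra gl(V)_B; that is, for all u, w in this span and all X ∈ gl(V)_B, the element ⁅u, ⁅w, X⁆⁆ again lies in the span of D_a, D_b and D_{a+b}. -/

import Mathlib

/-- The endomorphism `D_{a,b} : v ↦ B(v,b)·a + B(v,a)·b` of the symplectic setting. -/
def Dpair {k V : Type*} [Field k] [AddCommGroup V] [Module k V]
    (B : LinearMap.BilinForm k V) (a b : V) : Module.End k V :=
  (B.flip b).smulRight a + (B.flip a).smulRight b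

/-- The endomorphism `D_a : v ↦ B(v,a)·a` of the symplectic setting. -/
def Dsq {k V : Type*} [Field k] [AddCommGroup V] [Module k V]
    (B : LinearMap.BilinForm k V) (a : V) : Module.End k V :=
  (B.flip a).smulRight a

lemma key_bracket {k V : Type*} [Field k] [AddCommGroup V] [Module k V]
    (B : LinearMap.BilinForm k V) (hskew : ∀ u v : V, B u v = - B v u)
    (X : Module.End k V) (hX : ∀ u' v' : V, B u' (X v') = B v' (X u'))
    (c d : V) (hcd : B c d = 0) :
    ⁅Dsq B c, ⁅Dsq B d, X⁆⁆ = (B c (X d)) • Dpair B c d := by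
  have hdc : B d c = 0 := by rw [hskew]; simp [hcd]
  ext v
  simp only [Ring.lie_def, Dsq, Dpair, LinearMap.sub_apply, Module.End.mul_apply,
    LinearMap.smulRight_apply, LinearMap.add_apply, LinearMap.smul_apply,
    LinearMap.flip_apply, map_sub, map_smul, smul_smul, smul_sub, hcd, hdc,
    smul_eq_mul, mul_zero, zero_smul, sub_zero, zero_sub]
  simp only [LinearMap.BilinForm.flip_apply, LinearMap.flip_apply]
  have h1 : B (X d) c = - B c (X d) := by rw [hskew]
  have h2 : B (X c) d = - B c (X d) := by rw [hskew, hX]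
  rw [h1, h2, hdc, hcd]; module

lemma Dpair_comm {k V : Type*} [Field k] [AddCommGroup V] [Module k V]
    (B : LinearMap.BilinForm k V) (c d : V) : Dpair B c d = Dpair B d c := by
  simp [Dpair, add_comm]

lemma Dpair_self {k V : Type*} [Field k] [AddCommGroup V] [Module k V]
    (B : LinearMap.BilinForm k V) (c : V) : Dpair B c c = (2 : k) • Dsq B c := by
  ext v; simp [Dpair, Dsq, two_smul]

lemma Dpair_split {k V : Type*} [Field k] [AddCommGroup V] [Module k V]
    (B : LinearMap.BilinForm k V) (c d : V) :
    Dpair B c d = Dsq B (c + d) - Dsq B c - Dsq B d := by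
  ext v
  simp only [Dpair, Dsq, LinearMap.add_apply, LinearMap.sub_apply,
    LinearMap.smulRight_apply, LinearMap.flip_apply, map_add]
  module

/-- In the symplectic setting, if `B(a,b) = 0`, then the span of `D_a`, `D_b` and
`D_{a+b}` is an inner ideal of `gl(V)_B`: for all `u, w` in this span and every
`X ∈ gl(V)_B`, the element `⁅u, ⁅w, X⁆⁆` again lies in the span. -/
theorem stmt10 {k V : Type*} [Field k] [AddCommGroup V] [Module k V]
    (hchar : (2 : k) ≠ 0)
    (B : LinearMap.BilinForm k V) (halt : ∀ v : V, B v v = 0)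
    (a b : V) (hab : B a b = 0) :
    ∀ u ∈ Submodule.span k ({Dsq B a, Dsq B b, Dsq B (a + b)} : Set (Module.End k V)),
      ∀ w ∈ Submodule.span k ({Dsq B a, Dsq B b, Dsq B (a + b)} : Set (Module.End k V)),
        ∀ X : Module.End k V, (∀ u' v' : V, B u' (X v') = B v' (X u')) →
          ⁅u, ⁅w, X⁆⁆ ∈
            Submodule.span k ({Dsq B a, Dsq B b, Dsq B (a + b)} : Set (Module.End k V)) := by
  set S := Submodule.span k ({Dsq B a, Dsq B b, Dsq B (a + b)} : Set (Module.End k V)) with hS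
  have hskew : ∀ u v : V, B u v = - B v u := fun u v => by
    have := halt (u + v)
    simp only [map_add, LinearMap.add_apply, halt u, halt v] at this
    linear_combination this
  have hba : B b a = 0 := by rw [hskew, hab, neg_zero]
  -- all generators pair to 0 under B
  have hall : ∀ c ∈ ({a, b, a + b} : Set V), ∀ d ∈ ({a, b, a + b} : Set V), B c d = 0 := by
    rintro c (rfl | rfl | rfl) d (rfl | rfl | rfl) <;>
      simp [map_add, LinearMap.add_apply, halt, hab, hba]
  -- the Dsq generators lie in S
  have hmem : ∀ c ∈ ({a, b, a + b} : Set V), Dsq B c ∈ S := by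
    rintro c (rfl | rfl | rfl) <;> exact Submodule.subset_span (by simp)
  -- all Dpair's of generators lie in S
  have hpairab : Dpair B a b ∈ S := by
    rw [Dpair_split]
    exact sub_mem (sub_mem (hmem _ (by simp)) (hmem _ (by simp))) (hmem _ (by simp))
  have hpair : ∀ c ∈ ({a, b, a + b} : Set V), ∀ d ∈ ({a, b, a + b} : Set V),
      Dpair B c d ∈ S := by
    have hself : ∀ c ∈ ({a, b, a + b} : Set V), Dpair B c c ∈ S := fun c hc => by
      rw [Dpair_self]; exact S.smul_mem _ (hmem c hc)
    have haab : Dpair B a (a + b) ∈ S := by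
      have : Dpair B a (a + b) = Dpair B a a + Dpair B a b := by
        ext v
        simp only [Dpair, LinearMap.add_apply, LinearMap.smulRight_apply,
          LinearMap.flip_apply, map_add]
        module
      rw [this]
      exact S.add_mem (hself a (by simp)) hpairab
    have hbab : Dpair B b (a + b) ∈ S := by
      have : Dpair B b (a + b) = Dpair B b a + Dpair B b b := by
        ext v
        simp only [Dpair, LinearMap.add_apply, LinearMap.smulRight_apply,
          LinearMap.flip_apply, map_add]
        module
      rw [this, Dpair_comm B b a]
      exact S.add_mem hpairab (hself b (by simp))
    rintro c (rfl | rfl | rfl) d (rfl | rfl | rfl)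
    · exact hself _ (by simp)
    · exact hpairab
    · exact haab
    · rw [Dpair_comm]; exact hpairab
    · exact hself _ (by simp)
    · exact hbab
    · rw [Dpair_comm]; exact haab
    · rw [Dpair_comm]; exact hbab
    · exact hself _ (by simp)
  intro u hu w hw X hX
  -- generator case
  have hgen : ∀ c ∈ ({a, b, a + b} : Set V), ∀ d ∈ ({a, b, a + b} : Set V),
      ⁅Dsq B c, ⁅Dsq B d, X⁆⁆ ∈ S := fun c hc d hd => by
    rw [key_bracket B hskew X hX c d (hall c hc d hd)]
    exact S.smul_mem _ (hpair c hc d hd)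
  -- double induction over the span
  letI := LieRing.ofAssociativeRing (A := Module.End k V)
  induction hu using Submodule.span_induction with
  | mem u hu =>
    induction hw using Submodule.span_induction with
    | mem w hw =>
      rcases hu with rfl | rfl | rfl <;> rcases hw with rfl | rfl | rfl <;>
        exact hgen _ (by simp) _ (by simp)
    | zero => simp
    | add w₁ w₂ _ _ h1 h2 =>
      rw [add_lie, lie_add]
      exact S.add_mem h1 h2
    | smul t w _ h =>
      rw [smul_lie, lie_smul]
      exact S.smul_mem t h
  | zero => simp
  | add u₁ u₂ _ _ h1 h2 =>
    rw [add_lie]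
    exact S.add_mem h1 h2
  | smul t u _ h =>
    rw [smul_lie]
    exact S.smul_mem t h
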